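/- For a prime p ≡ 3 (mod 4) and r odd, the set R of pairs (v₃₅, v₄₅) with v₃₅ = a p^k, v₄₅ = b p^l (a, b ∈ ℤ_p^× ∪ {0}, 0 ≤ k, l < r) satisfying p^r ∣ v₃₅v₄₅, 2p^r ∣ v₃₅² ± v₄₅², and the coprimality conditions gcd(p^r, v₃₅, v₄₅, (v₃₅²+v₄₅²)/(2p^r)) = 1 = gcd(p^r, v₃₅, v₄₅, v₃₅v₄₅/p^r, (v₃₅²−v₄₅²)/(2p^r)), is empty; hence the SO(4,2) Kloosterman sum attached to s_α with odd modulus exponent r vanishes. -/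

import Mathlib

section Aux

variable {p : ℕ} [hp : Fact p.Prime]

private lemma aux_p_not_unit : ¬ IsUnit (p : ℤ_[p]) :=
  mem_nonunits_iff.1 PadicInt.p_nonunit

private lemma aux_tz {z : ℤ_[p]} : ¬ IsUnit z ↔ PadicInt.toZMod z = 0 := by
  rw [← mem_nonunits_iff, ← IsLocalRing.mem_maximalIdeal, ← PadicInt.ker_toZMod,
    RingHom.mem_ker]

private lemma aux_nu (x : ℤ_[p]) {n : ℕ} (hn : 0 < n) :
    ¬ IsUnit (x * (p : ℤ_[p]) ^ n) := fun h =>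
  aux_p_not_unit ((isUnit_pow_iff hn.ne').1 (isUnit_of_mul_isUnit_right h))

private lemma aux_cancel {u t : ℤ_[p]} (hu : IsUnit u) {a b : ℕ} (hab : a < b)
    (h : u * (p : ℤ_[p]) ^ a = (p : ℤ_[p]) ^ b * t) : False := by
  have hpz : (p : ℤ_[p]) ≠ 0 := Nat.cast_ne_zero.mpr hp.out.ne_zero
  have hb' : b = a + (b - a) := by omega
  rw [hb', pow_add] at h
  have h2 : u = (p : ℤ_[p]) ^ (b - a) * t := by
    apply mul_right_cancel₀ (pow_ne_zero a hpz)
    linear_combination h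
  have hd : (p : ℤ_[p]) ∣ u :=
    h2 ▸ Dvd.dvd.mul_right (dvd_pow_self _ (by omega : b - a ≠ 0)) t
  exact aux_p_not_unit (isUnit_of_dvd_unit hd hu)

private lemma aux_eq {u w : ℤ_[p]} (hu : IsUnit u) (hw : IsUnit w) {a b : ℕ}
    (h : u * (p : ℤ_[p]) ^ a = w * (p : ℤ_[p]) ^ b) : a = b := by
  rcases lt_trichotomy a b with h' | h' | h'
  · exact absurd (by linear_combination h : u * (p : ℤ_[p]) ^ a = (p : ℤ_[p]) ^ b * w)
      (fun hh => aux_cancel hu h' hh)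
  · exact h'
  · exact absurd (by linear_combination -h : w * (p : ℤ_[p]) ^ b = (p : ℤ_[p]) ^ a * u)
      (fun hh => aux_cancel hw h' hh)

private lemma aux_unit_add {u x : ℤ_[p]} (hu : IsUnit u) (hx : ¬ IsUnit x) :
    IsUnit (u + x) := by
  by_contra h
  have : u + x + -x ∈ nonunits ℤ_[p] :=
    IsLocalRing.nonunits_add (mem_nonunits_iff.2 h) (mem_nonunits_iff.2 (fun hh => hx (by simpa using hh.neg)))
  rw [add_neg_cancel_right] at this
  exact mem_nonunits_iff.1 this hu

private lemma aux_sq_add (hp4 : p % 4 = 3) {a b : ℤ_[p]} (ha : IsUnit a)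
    (hb : IsUnit b) : IsUnit (a ^ 2 + b ^ 2) := by
  by_contra h
  have h0 : PadicInt.toZMod (a ^ 2 + b ^ 2) = 0 := aux_tz.1 h
  rw [map_add, map_pow, map_pow] at h0
  set x := PadicInt.toZMod a with hx
  set y := PadicInt.toZMod b with hy
  have hx0 : x ≠ 0 := fun hh => (not_not.2 ha) (aux_tz.2 hh)
  have hy0 : y ≠ 0 := fun hh => (not_not.2 hb) (aux_tz.2 hh)
  have hsq : IsSquare (-1 : ZMod p) := by
    refine ⟨x * y⁻¹, ?_⟩
    field_simp
    linear_combination -h0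
  exact ZMod.exists_sq_eq_neg_one_iff.1 hsq hp4

private lemma aux_two {r : ℕ} (hodd : Odd r) {u c : ℤ_[p]} (hu : IsUnit u)
    (h2 : IsUnit (2 : ℤ_[p])) (hc : IsUnit c) {k : ℕ}
    (h : u * ((p : ℤ_[p]) ^ k) ^ 2 = 2 * c * (p : ℤ_[p]) ^ r) : False := by
  rw [← pow_mul] at h
  have := aux_eq hu (h2.mul hc) h
  obtain ⟨t, ht⟩ := hodd
  omega

end Aux

/-- For a prime `p ≡ 3 (mod 4)` and odd `r > 0`, the Plücker parameter set for the
`SO(4,2)` Weyl element `s_α` is empty: there are no `v₃₅ = a·p^k`, `v₄₅ = b·p^l`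
(`a, b ∈ ℤ_p^× ∪ {0}`, `0 ≤ k, l < r`) with `p^r ∣ v₃₅v₄₅` (quotient `d`),
`2p^r ∣ v₃₅² ± v₄₅²` (quotients `c`, `e`), and
`gcd(p^r, v₃₅, v₄₅, (v₃₅²+v₄₅²)/(2p^r)) = 1
  = gcd(p^r, v₃₅, v₄₅, v₃₅v₄₅/p^r, (v₃₅²−v₄₅²)/(2p^r))`
(phrased as the corresponding ideals of `ℤ_p` being the unit ideal).  Hence the
`SO(4,2)` Kloosterman sum attached to `s_α` with odd modulus exponent vanishes. -/
theorem so42_alpha_parameter_set_empty_odd_r (p : ℕ) [Fact p.Prime]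
    (hp4 : p % 4 = 3) (r : ℕ) (hr : 0 < r) (hodd : Odd r) :
    ¬ ∃ (a b c d e : ℤ_[p]) (k l : ℕ),
      (IsUnit a ∨ a = 0) ∧ (IsUnit b ∨ b = 0) ∧ k < r ∧ l < r ∧
      (a * (p : ℤ_[p]) ^ k) ^ 2 + (b * (p : ℤ_[p]) ^ l) ^ 2
        = 2 * (p : ℤ_[p]) ^ r * c ∧
      (a * (p : ℤ_[p]) ^ k) * (b * (p : ℤ_[p]) ^ l) = (p : ℤ_[p]) ^ r * d ∧
      (a * (p : ℤ_[p]) ^ k) ^ 2 - (b * (p : ℤ_[p]) ^ l) ^ 2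
        = 2 * (p : ℤ_[p]) ^ r * e ∧
      Ideal.span ({(p : ℤ_[p]) ^ r, a * (p : ℤ_[p]) ^ k,
        b * (p : ℤ_[p]) ^ l, c} : Set ℤ_[p]) = ⊤ ∧
      Ideal.span ({(p : ℤ_[p]) ^ r, a * (p : ℤ_[p]) ^ k,
        b * (p : ℤ_[p]) ^ l, d, e} : Set ℤ_[p]) = ⊤ := by
  have hp' : Fact p.Prime := inferInstance
  have hpz : (p : ℤ_[p]) ≠ 0 := Nat.cast_ne_zero.mpr hp'.out.ne_zero
  have h2u : IsUnit (2 : ℤ_[p]) := by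
    by_contra h
    have h0 : PadicInt.toZMod (2 : ℤ_[p]) = 0 := aux_tz.1 h
    rw [show ((2 : ℤ_[p]) = ((2 : ℕ) : ℤ_[p])) by norm_num, map_natCast,
      ZMod.natCast_eq_zero_iff] at h0
    have := Nat.le_of_dvd (by norm_num) h0
    omega
  have hpownu : ∀ n : ℕ, 0 < n → ¬ IsUnit ((p : ℤ_[p]) ^ n) := fun n hn h =>
    aux_p_not_unit ((isUnit_pow_iff hn.ne').1 h)
  rintro ⟨a, b, c, d, e, k, l, ha, hb, hk, hl, hplus, hmul, hminus, hspan1, hspan2⟩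
  -- If both v₃₅ and v₄₅ are nonunits, c must be a unit.
  have hCunit : ¬ IsUnit (a * (p : ℤ_[p]) ^ k) → ¬ IsUnit (b * (p : ℤ_[p]) ^ l) →
      IsUnit c := by
    intro h1 h2
    by_contra hc
    have hle : Ideal.span ({(p : ℤ_[p]) ^ r, a * (p : ℤ_[p]) ^ k,
        b * (p : ℤ_[p]) ^ l, c} : Set ℤ_[p]) ≤ IsLocalRing.maximalIdeal ℤ_[p] := by
      rw [Ideal.span_le]
      intro x hx
      simp only [Set.mem_insert_iff, Set.mem_singleton_iff] at hx
      rcases hx with rfl | rfl | rfl | rfl <;>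
        rw [SetLike.mem_coe, IsLocalRing.mem_maximalIdeal, mem_nonunits_iff]
      · exact hpownu r hr
      · exact h1
      · exact h2
      · exact hc
    rw [hspan1, top_le_iff] at hle
    exact (IsLocalRing.maximalIdeal.isMaximal ℤ_[p]).ne_top hle
  rcases ha with ha | rfl
  · rcases hb with hb | rfl
    · -- both units
      by_cases hkl : k + l < r
      · refine aux_cancel (t := d) (ha.mul hb) hkl ?_
        rw [pow_add]
        linear_combination hmul
      · have hk1 : 0 < k := by omega
        have hl1 : 0 < l := by omega
        have hc : IsUnit c := hCunit (aux_nu a hk1) (aux_nu b hl1)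
        rcases lt_trichotomy k l with hkl' | rfl | hkl'
        · obtain ⟨m, rfl⟩ : ∃ m, l = k + (m + 1) := ⟨l - k - 1, by omega⟩
          have hsplit : (p : ℤ_[p]) ^ (k + (m + 1))
              = (p : ℤ_[p]) ^ k * (p : ℤ_[p]) ^ (m + 1) := pow_add _ _ _
          refine aux_two (k := k) hodd
            (aux_unit_add (ha.pow 2)
              (fun h => aux_nu (b * (p : ℤ_[p]) ^ (m + 1) * b) (by omega : 0 < m + 1)
                (by rw [show b * (p : ℤ_[p]) ^ (m+1) * b * (p : ℤ_[p]) ^ (m+1)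
                      = (b * (p : ℤ_[p]) ^ (m+1)) ^ 2 by ring]; exact h)))
            h2u hc ?_
          rw [hsplit] at hplus
          linear_combination hplus
        · refine aux_two (k := k) hodd (aux_sq_add hp4 ha hb) h2u hc ?_
          linear_combination hplus
        · obtain ⟨m, rfl⟩ : ∃ m, k = l + (m + 1) := ⟨k - l - 1, by omega⟩
          have hsplit : (p : ℤ_[p]) ^ (l + (m + 1))
              = (p : ℤ_[p]) ^ l * (p : ℤ_[p]) ^ (m + 1) := pow_add _ _ _
          refine aux_two (k := l) hodd
            (aux_unit_add (hb.pow 2)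
              (fun h => aux_nu (a * (p : ℤ_[p]) ^ (m + 1) * a) (by omega : 0 < m + 1)
                (by rw [show a * (p : ℤ_[p]) ^ (m+1) * a * (p : ℤ_[p]) ^ (m+1)
                      = (a * (p : ℤ_[p]) ^ (m+1)) ^ 2 by ring]; exact h)))
            h2u hc ?_
          rw [hsplit] at hplus
          linear_combination hplus
    · -- a unit, b = 0
      rcases Nat.eq_zero_or_pos k with rfl | hk1
      · refine aux_cancel (ha.pow 2) hr
          (?_ : a ^ 2 * (p : ℤ_[p]) ^ 0 = (p : ℤ_[p]) ^ r * (2 * c))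
        linear_combination hplus
      · have hc : IsUnit c := hCunit (aux_nu a hk1)
          (by rw [zero_mul]; exact not_isUnit_zero)
        refine aux_two (k := k) hodd (ha.pow 2) h2u hc ?_
        linear_combination hplus
  · rcases hb with hb | rfl
    · -- a = 0, b unit
      rcases Nat.eq_zero_or_pos l with rfl | hl1
      · refine aux_cancel (hb.pow 2) hr
          (?_ : b ^ 2 * (p : ℤ_[p]) ^ 0 = (p : ℤ_[p]) ^ r * (2 * c))
        linear_combination hplus
      · have hc : IsUnit c := hCunit (by rw [zero_mul]; exact not_isUnit_zero)
          (aux_nu b hl1)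
        refine aux_two (k := l) hodd (hb.pow 2) h2u hc ?_
        linear_combination hplus
    · -- a = 0, b = 0
      have hc : IsUnit c := hCunit (by rw [zero_mul]; exact not_isUnit_zero)
        (by rw [zero_mul]; exact not_isUnit_zero)
      have : (2 : ℤ_[p]) * (p : ℤ_[p]) ^ r * c ≠ 0 :=
        mul_ne_zero (mul_ne_zero h2u.ne_zero (pow_ne_zero r hpz)) hc.ne_zero
      exact this (by linear_combination -hplus)
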